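/- If a periodic function h : ℝ → ℝ with period 1 satisfies h(x) = |x|^α h((2x−1)/x) and h(x) = −|x|^α h((1−x)/x) for all x ≠ 0, together with h(0) = 0, then h vanishes at every rational number in [0,1]. -/

import Mathlib

/-- If a 1-periodic function `h` with `h(0) = 0` satisfies
`h(x) = |x|^α h((2x−1)/x)` and `h(x) = −|x|^α h((1−x)/x)` for all `x ≠ 0`,
then `h` vanishes at every rational point of `[0,1]`. -/
theorem periodic_functional_eq_vanishes_on_rationals
    (α : ℝ) (hα : 0 < α)
    (h : ℝ → ℝ)
    (hper : ∀ x : ℝ, h (x + 1) = h x)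
    (h0 : h 0 = 0)
    (heq1 : ∀ x : ℝ, x ≠ 0 → h x = |x| ^ α * h ((2 * x - 1) / x))
    (heq2 : ∀ x : ℝ, x ≠ 0 → h x = -(|x| ^ α) * h ((1 - x) / x)) :
    ∀ q : ℚ, 0 ≤ q → q ≤ 1 → h (q : ℝ) = 0 := by
  -- integer periodicity
  have hint : ∀ (n : ℤ) (x : ℝ), h (x + n) = h x := by
    intro n
    induction n using Int.induction_on with
    | zero => simp
    | succ k ih =>
      intro x
      have : x + ((k : ℤ) + 1 : ℤ) = (x + (k : ℤ)) + 1 := by push_cast; ring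
      rw [this, hper, ih]
    | pred k ih =>
      intro x
      have : x + (-(k : ℤ) - 1 : ℤ) + 1 = x + (-(k : ℤ) : ℤ) := by push_cast; ring
      have h2 := hper (x + (-(k : ℤ) - 1 : ℤ))
      rw [this] at h2
      rw [← h2]; exact ih x
  suffices H : ∀ n : ℕ, ∀ q : ℚ, q.den = n → 0 ≤ q → q ≤ 1 → h (q : ℝ) = 0 by
    intro q hq0 hq1; exact H q.den q rfl hq0 hq1
  intro n
  induction n using Nat.strong_induction_on with
  | _ n ih =>
    intro q hden hq0 hq1
    rcases eq_or_lt_of_le hq0 with hq0' | hq0'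
    · rw [← hq0']; simpa using h0
    rcases eq_or_lt_of_le hq1 with hq1' | hq1'
    · rw [hq1']
      have := hper 0
      simpa [h0] using this
    -- now 0 < q < 1
    have hqR : (q : ℝ) ≠ 0 := by
      exact_mod_cast (ne_of_gt hq0')
    set r : ℚ := (1 - q) / q with hrdef
    have hcast : ((1 : ℝ) - (q : ℝ)) / (q : ℝ) = (r : ℝ) := by
      rw [hrdef]; push_cast; ring
    -- denominator of r divides q.num
    have hnum_pos : 0 < q.num := Rat.num_pos.mpr hq0'
    have hnum_ne : (q.num : ℚ) ≠ 0 := by exact_mod_cast (ne_of_gt hnum_pos)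
    have hr_eq : r = Rat.divInt ((q.den : ℤ) - q.num) q.num := by
      rw [Rat.divInt_eq_div, hrdef]
      rw [div_eq_div_iff (by exact_mod_cast (ne_of_gt hq0')) hnum_ne]
      have hden_ne : ((q.den : ℚ)) ≠ 0 := Nat.cast_ne_zero.mpr q.den_ne_zero
      have hqn : (q.num : ℚ) = q * q.den := by
        have h' := Rat.num_div_den q
        rwa [div_eq_iff hden_ne] at h'
      push_cast
      rw [hqn]; ring
    have hr_den_dvd : (r.den : ℤ) ∣ q.num := by
      rw [hr_eq]; exact Rat.den_dvd _ _
    have hr_den_le : r.den ≤ q.num.natAbs := by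
      have : r.den ∣ q.num.natAbs := by
        have := Int.natAbs_dvd_natAbs.mpr hr_den_dvd
        simpa using this
      exact Nat.le_of_dvd (Int.natAbs_pos.mpr (ne_of_gt hnum_pos)) this
    have hnum_lt : q.num.natAbs < q.den := by
      have h1 : q.num < q.den := Rat.lt_one_iff_num_lt_denom.mpr hq1'
      omega
    have hr_den_lt : r.den < n := by
      rw [← hden]; exact lt_of_le_of_lt hr_den_le hnum_lt
    -- fractional part of r
    set s : ℚ := r - ⌊r⌋ with hsdef
    have hs_den_dvd : s.den ∣ r.den := by
      have := Rat.add_den_dvd r (-(⌊r⌋ : ℚ))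
      have hcast2 : ((-(⌊r⌋) : ℤ) : ℚ) = -(⌊r⌋ : ℚ) := by push_cast; ring
      simp only [← hcast2, Rat.den_intCast, mul_one] at this
      have hs : s = r + ((-(⌊r⌋) : ℤ) : ℚ) := by rw [hsdef, hcast2]; ring
      rw [hs]; exact this
    have hs_den_lt : s.den < n :=
      lt_of_le_of_lt (Nat.le_of_dvd r.pos hs_den_dvd) hr_den_lt
    have hs0 : 0 ≤ s := by
      rw [hsdef]; exact sub_nonneg.mpr (Int.floor_le r)
    have hs1 : s ≤ 1 := by
      rw [hsdef]
      have := Int.lt_floor_add_one r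
      linarith
    have hhs : h (s : ℝ) = 0 := ih s.den hs_den_lt s rfl hs0 hs1
    -- h r = h s
    have hrs : h (r : ℝ) = 0 := by
      have : (r : ℝ) = (s : ℝ) + (⌊r⌋ : ℤ) := by rw [hsdef]; push_cast; ring
      rw [this, hint, hhs]
    have := heq2 (q : ℝ) hqR
    rw [hcast, hrs, mul_zero] at this
    exact this
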